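/- Let a > 0, b, c be real, and on an interval where cos(√(2a)(u+c)) ≠ 0 and sin(√(2a)(u+c)) ≠ 0 define r(u) = √(a/2)·tan(√(2a)(u+c)), f(u) = -(√2 b/a^{3/2})cot(√(2a)(u+c)) - (2b/a)(u+c), g(u) = -(b²/(√2 a^{5/2}))cot(√(2a)(u+c)) + (p/(4√(2a)))sin(2√(2a)(u+c)) + (p/2 - b²/a²)(u+c). Then r' = 2r² + a, r²f' = b, and b²/r(u)² - 2a·g'(u) = -2ap·cos²(√(2a)(u+c)). -/

import Mathlib

/-- For `a > 0` the explicit functions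
`r(u) = √(a/2)·tan(√(2a)(u+c))`,
`f(u) = -(√2 b/a^{3/2})cot(√(2a)(u+c)) - (2b/a)(u+c)`,
`g(u) = -(b²/(√2 a^{5/2}))cot(√(2a)(u+c)) + (p/(4√(2a)))sin(2√(2a)(u+c)) + (p/2 - b²/a²)(u+c)`
satisfy `r' = 2r² + a`, `r²f' = b`, and `b²/r(u)² - 2a·g'(u) = -2ap·cos²(√(2a)(u+c))`
wherever `cos(√(2a)(u+c)) ≠ 0` and `sin(√(2a)(u+c)) ≠ 0`. -/
theorem stmt11 (a b c p : ℝ) (ha : 0 < a)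
    (r f g : ℝ → ℝ)
    (hr : ∀ u, r u = Real.sqrt (a / 2) * Real.tan (Real.sqrt (2 * a) * (u + c)))
    (hf : ∀ u, f u = -(Real.sqrt 2 * b / a ^ ((3:ℝ)/2)) *
        (Real.cos (Real.sqrt (2 * a) * (u + c)) / Real.sin (Real.sqrt (2 * a) * (u + c))) -
        (2 * b / a) * (u + c))
    (hg : ∀ u, g u = -(b ^ 2 / (Real.sqrt 2 * a ^ ((5:ℝ)/2))) *
        (Real.cos (Real.sqrt (2 * a) * (u + c)) / Real.sin (Real.sqrt (2 * a) * (u + c))) +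
        (p / (4 * Real.sqrt (2 * a))) * Real.sin (2 * Real.sqrt (2 * a) * (u + c)) +
        (p / 2 - b ^ 2 / a ^ 2) * (u + c)) :
    ∀ u : ℝ, Real.cos (Real.sqrt (2 * a) * (u + c)) ≠ 0 →
      Real.sin (Real.sqrt (2 * a) * (u + c)) ≠ 0 →
      HasDerivAt r (2 * (r u) ^ 2 + a) u ∧
      (r u) ^ 2 * deriv f u = b ∧
      b ^ 2 / (r u) ^ 2 - 2 * a * deriv g u =
        -2 * a * p * (Real.cos (Real.sqrt (2 * a) * (u + c))) ^ 2 := by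
  intro u hcos hsin
  set s : ℝ := Real.sqrt (2 * a) with hs_def
  set θ : ℝ := s * (u + c) with hθ_def
  set si : ℝ := Real.sin θ with hsi_def
  set co : ℝ := Real.cos θ with hco_def
  have ha' : (0:ℝ) ≤ a := ha.le
  have ha0 : a ≠ 0 := ha.ne'
  have hsa : Real.sqrt a ^ 2 = a := Real.sq_sqrt ha'
  have hsa0 : Real.sqrt a ≠ 0 := by positivity
  have h2 : Real.sqrt 2 ^ 2 = 2 := Real.sq_sqrt (by norm_num)
  have h20 : Real.sqrt 2 ≠ 0 := by positivity
  have hs_eq : s = Real.sqrt 2 * Real.sqrt a := Real.sqrt_mul (by norm_num) a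
  have hha2 : Real.sqrt (a / 2) = Real.sqrt a / Real.sqrt 2 := Real.sqrt_div ha' 2
  have h32 : a ^ ((3:ℝ)/2) = a * Real.sqrt a := by
    rw [show (3:ℝ)/2 = 1 + 1/2 by norm_num, Real.rpow_add ha, Real.rpow_one,
      ← Real.sqrt_eq_rpow]
  have h52 : a ^ ((5:ℝ)/2) = a ^ 2 * Real.sqrt a := by
    rw [show (5:ℝ)/2 = 2 + 1/2 by norm_num, Real.rpow_add ha, ← Real.sqrt_eq_rpow,
      Real.rpow_two]
  have hpy : si ^ 2 + co ^ 2 = 1 := Real.sin_sq_add_cos_sq θ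
  have hpy' : si ^ 2 = 1 - co ^ 2 := by linarith
  have hlin : HasDerivAt (fun u : ℝ => s * (u + c)) s u := by
    simpa using ((hasDerivAt_id u).add_const c).const_mul s
  have hlin2 : HasDerivAt (fun u : ℝ => 2 * s * (u + c)) (2 * s) u := by
    simpa using ((hasDerivAt_id u).add_const c).const_mul (2 * s)
  have hcosd : HasDerivAt (fun u : ℝ => Real.cos (s * (u + c))) (-si * s) u :=
    (Real.hasDerivAt_cos θ).comp (h₂ := Real.cos) u hlin
  have hsind : HasDerivAt (fun u : ℝ => Real.sin (s * (u + c))) (co * s) u :=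
    (Real.hasDerivAt_sin θ).comp (h₂ := Real.sin) u hlin
  have hcot : HasDerivAt
      (fun u : ℝ => Real.cos (s * (u + c)) / Real.sin (s * (u + c)))
      ((-si * s * si - co * (co * s)) / si ^ 2) u := hcosd.div hsind hsin
  have hsin2d : HasDerivAt (fun u : ℝ => Real.sin (2 * s * (u + c)))
      (Real.cos (2 * s * (u + c)) * (2 * s)) u :=
    (Real.hasDerivAt_sin (2 * s * (u + c))).comp (h₂ := Real.sin) u hlin2
  -- part 1
  have hsi' : Real.sin (s * (u + c)) = si := rfl
  have hco' : Real.cos (s * (u + c)) = co := rfl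
  have part1 : HasDerivAt r (2 * (r u) ^ 2 + a) u := by
    have htan : HasDerivAt (fun u : ℝ => Real.tan (s * (u + c)))
        (1 / co ^ 2 * s) u := (Real.hasDerivAt_tan hcos).comp (h₂ := Real.tan) u hlin
    have h1 : HasDerivAt (fun u : ℝ => Real.sqrt (a / 2) * Real.tan (s * (u + c)))
        (Real.sqrt (a / 2) * (1 / co ^ 2 * s)) u := htan.const_mul _
    have hfun : r = fun u : ℝ => Real.sqrt (a / 2) * Real.tan (s * (u + c)) := funext hr
    have h1' : HasDerivAt r (Real.sqrt (a / 2) * (1 / co ^ 2 * s)) u := hfun ▸ h1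
    convert h1' using 1
    rw [hr u, Real.tan_eq_sin_div_cos, hsi', hco', hha2, hs_eq]
    field_simp
    linear_combination (2*si^2 - (Real.sqrt 2)^2) * hsa + (a*(co^2-1)) * h2 + (2*a) * hpy'
  refine ⟨part1, ?_, ?_⟩
  -- part 2
  · have hfd : HasDerivAt f
        (-(Real.sqrt 2 * b / a ^ ((3:ℝ)/2)) * ((-si * s * si - co * (co * s)) / si ^ 2)
          - (2 * b / a) * 1) u := by
      have hfun : f = fun u : ℝ => -(Real.sqrt 2 * b / a ^ ((3:ℝ)/2)) *
          (Real.cos (s * (u + c)) / Real.sin (s * (u + c))) - (2 * b / a) * (u + c) :=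
        funext hf
      rw [hfun]
      exact (hcot.const_mul _).sub (((hasDerivAt_id u).add_const c).const_mul (2 * b / a))
    rw [hfd.deriv, hr u, Real.tan_eq_sin_div_cos, hsi', hco', hha2, hs_eq, h32]
    field_simp
    linear_combination (b*(Real.sqrt 2)^2*si^2 + b*(Real.sqrt 2)^2*co^2 - 2*b*si^2) * hsa + (a*b*si^2) * h2
  -- part 3
  · have hgd : HasDerivAt g
        (-(b ^ 2 / (Real.sqrt 2 * a ^ ((5:ℝ)/2))) * ((-si * s * si - co * (co * s)) / si ^ 2)
          + (p / (4 * s)) * (Real.cos (2 * s * (u + c)) * (2 * s))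
          + (p / 2 - b ^ 2 / a ^ 2) * 1) u := by
      have hfun : g = fun u : ℝ => -(b ^ 2 / (Real.sqrt 2 * a ^ ((5:ℝ)/2))) *
          (Real.cos (s * (u + c)) / Real.sin (s * (u + c))) +
          (p / (4 * s)) * Real.sin (2 * s * (u + c)) +
          (p / 2 - b ^ 2 / a ^ 2) * (u + c) := funext hg
      rw [hfun]
      exact ((hcot.const_mul _).add (hsin2d.const_mul _)).add
        (((hasDerivAt_id u).add_const c).const_mul _)
    have hc2 : Real.cos (2 * s * (u + c)) = 2 * co ^ 2 - 1 := by
      rw [show 2 * s * (u + c) = 2 * (s * (u + c)) by ring, Real.cos_two_mul, hco_def]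
    rw [hgd.deriv, hc2, hr u, Real.tan_eq_sin_div_cos, hsi', hco', hha2, hs_eq, h52]
    have hs0 : s ≠ 0 := by rw [hs_eq]; positivity
    field_simp
    linear_combination (-8*b^2*co^2) * hsa + (4*a*b^2*co^2) * h2
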